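/- For n \ge 3 and 1 \le s \le n-1, the number of (s-1)-codimensional faces of the (n-2)-dimensional Stasheff associahedron equals the Kirkman-Cayley number D_{n+1,s-1} = (1/s) \binom{n-2}{s-1} \binom{n+s-1}{s-1}, and this equals (n+s-1)!/n! times the coefficient C_{n,s}/(n+s-1)! of z^s t^{n+s-1} in e^{z t^2/(1-t)} - 1, i.e., C_{n,s} = n! \cdot D_{n+1,s-1}, where C_{n,s} is the number of plane rooted trees with n ordered leaves and s internal vertices each having at least two children. -/

import Mathlib

/-- Plane rooted trees: a tree is a leaf or a node with an (ordered) list of subtrees. -/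
inductive PTree where
  | leaf : PTree
  | node : List PTree → PTree

namespace PTree

/-- Number of leaves of a plane rooted tree. -/
def numLeaves : PTree → ℕ
  | .leaf => 1
  | .node l => (l.attach.map (fun x => numLeaves x.1)).sum
decreasing_by simp only [PTree.node.sizeOf_spec]; have h := List.sizeOf_lt_of_mem x.2; omega

/-- Number of internal vertices of a plane rooted tree. -/
def numInternal : PTree → ℕ
  | .leaf => 0
  | .node l => 1 + (l.attach.map (fun x => numInternal x.1)).sum
decreasing_by simp only [PTree.node.sizeOf_spec]; have h := List.sizeOf_lt_of_mem x.2; omega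

/-- Every internal vertex has at least two children. -/
def valid : PTree → Prop
  | .leaf => True
  | .node l => 2 ≤ l.length ∧ ∀ x ∈ l.attach, valid x.1
decreasing_by simp only [PTree.node.sizeOf_spec]; have h := List.sizeOf_lt_of_mem x.2; omega

end PTree

namespace PTree

def code : PTree → List ℕ
  | .leaf => [0]
  | .node l => l.length :: (l.attach.map (fun x => code x.1)).flatten
decreasing_by simp only [PTree.node.sizeOf_spec]; have h := List.sizeOf_lt_of_mem x.2; omega

lemma numLeaves_node (l : List PTree) : numLeaves (.node l) = (l.map numLeaves).sum := by
  rw [numLeaves]; congr 1; simp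

lemma numInternal_node (l : List PTree) :
    numInternal (.node l) = 1 + (l.map numInternal).sum := by
  rw [numInternal]; congr 2; simp

lemma valid_leaf : valid .leaf := by rw [valid]; trivial

lemma valid_node_iff (l : List PTree) :
    valid (.node l) ↔ 2 ≤ l.length ∧ ∀ T ∈ l, valid T := by
  rw [valid]
  simp

lemma code_node (l : List PTree) :
    code (.node l) = l.length :: (l.map code).flatten := by
  rw [code]; congr 2; simp

end PTree


open PTree

/-- Code of a forest. -/
def fcode (l : List PTree) : List ℕ := (l.map code).flatten

@[simp] lemma fcode_nil : fcode [] = [] := rfl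

lemma fcode_cons (T : PTree) (l : List PTree) : fcode (T :: l) = code T ++ fcode l := by
  simp [fcode]

lemma fcode_append (l₁ l₂ : List PTree) : fcode (l₁ ++ l₂) = fcode l₁ ++ fcode l₂ := by
  simp [fcode]

lemma fcode_leaf_cons (l : List PTree) : fcode (.leaf :: l) = 0 :: fcode l := by
  rw [fcode_cons]; rw [code]; rfl

lemma fcode_node_cons (ts l : List PTree) :
    fcode (.node ts :: l) = ts.length :: fcode (ts ++ l) := by
  rw [fcode_cons, code_node, fcode_append]; rfl

lemma sizeOf_append_ptree : ∀ (l₁ l₂ : List PTree), sizeOf (l₁ ++ l₂) + 1 = sizeOf l₁ + sizeOf l₂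
  | [], l₂ => by simp; omega
  | a :: l₁, l₂ => by
    have := sizeOf_append_ptree l₁ l₂
    simp only [List.cons_append, List.cons.sizeOf_spec]
    omega

/-- entries are 0 or ≥ 2 -/
def Ok (w : List ℕ) : Prop := ∀ a ∈ w, a = 0 ∨ 2 ≤ a

/-- balance condition for a forest of `k` trees -/
def Bal (k : ℕ) (w : List ℕ) : Prop := w.sum + k = w.length

/-- domination condition for a forest of `k` trees -/
def Dom (k : ℕ) (w : List ℕ) : Prop := ∀ i < w.length, i < (w.take i).sum + k

lemma facts_cons {w : List ℕ} {a k : ℕ} (hk : 1 ≤ k) (ha : a = 0 ∨ 2 ≤ a)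
    (hOk : Ok w) (hBal : Bal (k - 1 + a) w) (hDom : Dom (k - 1 + a) w) :
    Ok (a :: w) ∧ Bal k (a :: w) ∧ Dom k (a :: w) := by
  refine ⟨?_, ?_, ?_⟩
  · intro b hb
    rcases List.mem_cons.1 hb with h | h
    · subst h; exact ha
    · exact hOk b h
  · unfold Bal at *
    simp only [List.sum_cons, List.length_cons]
    omega
  · intro i hi
    match i with
    | 0 => simp; omega
    | j + 1 =>
      have hj : j < w.length := by simpa using hi
      have := hDom j hj
      simp only [List.take_succ_cons, List.sum_cons]
      omega

lemma forest_facts : ∀ l : List PTree, (∀ T ∈ l, T.valid) →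
    Ok (fcode l) ∧ Bal l.length (fcode l) ∧ Dom l.length (fcode l)
  | [] => fun _ => by
      refine ⟨by intro a ha; simp at ha, by simp [Bal], by intro i hi; simp at hi⟩
  | .leaf :: l => fun hv => by
      have IH := forest_facts l (fun T hT => hv T (List.mem_cons_of_mem _ hT))
      rw [fcode_leaf_cons]
      have := facts_cons (w := fcode l) (a := 0) (k := l.length + 1)
        (by omega) (Or.inl rfl) IH.1 (by simpa using IH.2.1) (by simpa using IH.2.2)
      simpa using this
  | .node ts :: l => fun hv => by
      have hvn := hv _ (List.mem_cons_self)
      rw [valid_node_iff] at hvn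
      have IH := forest_facts (ts ++ l) (by
        intro T hT
        rcases List.mem_append.1 hT with h | h
        · exact hvn.2 T h
        · exact hv T (List.mem_cons_of_mem _ h))
      rw [fcode_node_cons]
      have hlen : (ts ++ l).length = (l.length + 1) - 1 + ts.length := by
        simp; omega
      have := facts_cons (w := fcode (ts ++ l)) (a := ts.length) (k := l.length + 1)
        (by omega) (Or.inr hvn.1) IH.1 (by rw [← hlen]; exact IH.2.1)
        (by rw [← hlen]; exact IH.2.2)
      simpa using this
  decreasing_by
  all_goals simp only [List.cons.sizeOf_spec, PTree.node.sizeOf_spec]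
  · omega
  · have := sizeOf_append_ptree ts l; omega

lemma code_ne_nil (T : PTree) : code T ≠ [] := by
  cases T with
  | leaf => rw [code]; simp
  | node l => rw [code_node]; simp

/-- Unique decoding of dominated balanced words into forests of valid trees. -/
lemma decodeEU : ∀ (w : List ℕ), Ok w → ∀ k : ℕ, Bal k w → Dom k w →
    ∃! l : List PTree, (∀ T ∈ l, T.valid) ∧ l.length = k ∧ fcode l = w
  | [] => by
    intro _ k hBal _
    have hk : k = 0 := by unfold Bal at hBal; simpa using hBal
    subst hk
    refine ⟨[], ⟨by simp, rfl, rfl⟩, ?_⟩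
    rintro l ⟨-, hl, -⟩
    exact List.length_eq_zero_iff.1 hl
  | a :: w' => by
    intro hOk k hBal hDom
    have hk : 1 ≤ k := by
      have := hDom 0 (by simp)
      simp at this; omega
    have ha := hOk a (List.mem_cons_self)
    have hOk' : Ok w' := fun b hb => hOk b (List.mem_cons_of_mem _ hb)
    set k' := k - 1 + a with hk'
    have hBal' : Bal k' w' := by
      unfold Bal at *; simp only [List.sum_cons, List.length_cons] at hBal; omega
    have hDom' : Dom k' w' := by
      intro i hi
      have := hDom (i + 1) (by simpa using hi)
      simp only [List.take_succ_cons, List.sum_cons] at this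
      omega
    obtain ⟨l', ⟨hv', hlen', hc'⟩, huniq⟩ := decodeEU w' hOk' k' hBal' hDom'
    rcases ha with ha | ha
    · -- a = 0 : leaf
      subst ha
      refine ⟨.leaf :: l', ⟨?_, ?_, ?_⟩, ?_⟩
      · intro T hT
        rcases List.mem_cons.1 hT with h | h
        · subst h; exact valid_leaf
        · exact hv' T h
      · simp [hlen', hk']; omega
      · rw [fcode_leaf_cons, hc']
      · rintro m ⟨hmv, hml, hmc⟩
        match m with
        | [] => simp at hml; omega
        | T :: rest =>
          have hTv := hmv T (List.mem_cons_self)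
          have hT : T = .leaf := by
            cases T with
            | leaf => rfl
            | node ts =>
              rw [valid_node_iff] at hTv
              rw [fcode_node_cons] at hmc
              have : ts.length = 0 := (List.cons_eq_cons.1 hmc).1
              omega
          subst hT
          rw [fcode_leaf_cons] at hmc
          have hrest : rest = l' := by
            apply huniq
            refine ⟨fun T hT => hmv T (List.mem_cons_of_mem _ hT), ?_, ?_⟩
            · simp at hml; omega
            · exact (List.cons_eq_cons.1 hmc).2
          rw [hrest]
    · -- a ≥ 2 : node
      have hal : a ≤ l'.length := by omega
      refine ⟨.node (l'.take a) :: l'.drop a, ⟨?_, ?_, ?_⟩, ?_⟩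
      · intro T hT
        rcases List.mem_cons.1 hT with h | h
        · subst h
          rw [valid_node_iff]
          constructor
          · rw [List.length_take]; omega
          · intro T hT; exact hv' T (List.mem_of_mem_take hT)
        · exact hv' T (List.mem_of_mem_drop h)
      · simp [hlen']; omega
      · rw [fcode_node_cons, List.take_append_drop, hc']
        rw [List.length_take, Nat.min_eq_left hal]
      · rintro m ⟨hmv, hml, hmc⟩
        match m with
        | [] => simp at hml; omega
        | T :: rest =>
          have hTv := hmv T (List.mem_cons_self)
          cases T with
          | leaf =>
            rw [fcode_leaf_cons] at hmc
            have : (0 : ℕ) = a := (List.cons_eq_cons.1 hmc).1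
            omega
          | node ts =>
            rw [fcode_node_cons] at hmc
            obtain ⟨hts, hwc⟩ := List.cons_eq_cons.1 hmc
            rw [valid_node_iff] at hTv
            have hcomb : ts ++ rest = l' := by
              apply huniq
              refine ⟨?_, ?_, hwc⟩
              · intro T hT
                rcases List.mem_append.1 hT with h | h
                · exact hTv.2 T h
                · exact hmv T (List.mem_cons_of_mem _ h)
              · simp at hml ⊢; omega
            have h1 : ts = l'.take a := by
              rw [← hcomb, ← hts, List.take_left]
            have h2 : rest = l'.drop a := by
              rw [← hcomb, ← hts, List.drop_left]
            rw [h1, h2]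

/-- Statistics of forest codes. -/
lemma forest_stats : ∀ l : List PTree, (∀ T ∈ l, T.valid) →
    (fcode l).count 0 = (l.map numLeaves).sum ∧
    (fcode l).length = (l.map numLeaves).sum + (l.map numInternal).sum
  | [] => fun _ => by simp
  | .leaf :: l => fun hv => by
    have IH := forest_stats l (fun T hT => hv T (List.mem_cons_of_mem _ hT))
    rw [fcode_leaf_cons]
    simp only [List.count_cons_self, List.map_cons, List.sum_cons, List.length_cons]
    rw [numLeaves, numInternal]
    omega
  | .node ts :: l => fun hv => by
    have hvn := hv _ (List.mem_cons_self)
    rw [valid_node_iff] at hvn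
    have IH := forest_stats (ts ++ l) (by
      intro T hT
      rcases List.mem_append.1 hT with h | h
      · exact hvn.2 T h
      · exact hv T (List.mem_cons_of_mem _ h))
    rw [fcode_node_cons]
    have hts : ts.length ≠ 0 := by omega
    simp only [List.map_cons, List.sum_cons, List.map_append, List.sum_append,
      List.length_cons] at IH ⊢
    rw [List.count_cons_of_ne (by omega)]
    rw [numLeaves_node, numInternal_node]
    omega
  decreasing_by
  all_goals simp only [List.cons.sizeOf_spec, PTree.node.sizeOf_spec]
  · omega
  · have := sizeOf_append_ptree ts l; omega

lemma code_facts {T : PTree} (hT : T.valid) :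
    Ok (code T) ∧ Bal 1 (code T) ∧ Dom 1 (code T) ∧
    (code T).count 0 = T.numLeaves ∧ (code T).length = T.numLeaves + T.numInternal := by
  have h1 := forest_facts [T] (by simpa using hT)
  have h2 := forest_stats [T] (by simpa using hT)
  have hfc : fcode [T] = code T := by simp [fcode]
  rw [hfc] at h1 h2
  simp only [List.map_cons, List.map_nil, List.sum_cons, List.sum_nil, List.length_cons,
    List.length_nil, add_zero] at h1 h2
  exact ⟨h1.1, h1.2.1, h1.2.2, h2.1, h2.2⟩

/-- Dominated words (tree codes). -/
def WordD (n s : ℕ) : Type :=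
  {w : List ℕ // Ok w ∧ w.count 0 = n ∧ w.length = n + s ∧ Bal 1 w ∧ Dom 1 w}

noncomputable def treeEquiv (n s : ℕ) (hs : 1 ≤ s) :
    {T : PTree // T.valid ∧ T.numLeaves = n ∧ T.numInternal = s} ≃ WordD n s := by
  apply Equiv.ofBijective (f := fun T => ⟨code T.1, by
    obtain ⟨hv, hL, hI⟩ := T.2
    obtain ⟨h1, h2, h3, h4, h5⟩ := code_facts hv
    exact ⟨h1, by rw [h4, hL], by rw [h5, hL, hI], h2, h3⟩⟩)
  constructor
  · rintro ⟨T, hT⟩ ⟨T', hT'⟩ h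
    have hcode : code T = code T' := congrArg Subtype.val h
    obtain ⟨hv, -, -⟩ := hT
    obtain ⟨hv', -, -⟩ := hT'
    obtain ⟨hOk, hBal, hDom, -, -⟩ := code_facts hv
    obtain ⟨l, -, huniq⟩ := decodeEU (code T) hOk 1 hBal hDom
    have e1 : [T] = l := huniq [T] ⟨by simpa using hv, rfl, by simp [fcode]⟩
    have e2 : [T'] = l := huniq [T'] ⟨by simpa using hv', rfl, by simp [fcode, hcode]⟩
    have := e1.trans e2.symm
    simpa using this
  · rintro ⟨w, hOk, hcount, hlen, hBal, hDom⟩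
    obtain ⟨l, ⟨hv, hl1, hfc⟩, -⟩ := decodeEU w hOk 1 hBal hDom
    match l, hl1 with
    | [T], _ =>
      have hTv : T.valid := hv T (List.mem_cons_self)
      have hcw : code T = w := by simpa [fcode] using hfc
      obtain ⟨-, -, -, h4, h5⟩ := code_facts hTv
      rw [hcw] at h4 h5
      exact ⟨⟨T, hTv, by omega, by omega⟩, Subtype.ext hcw⟩

section CycleLemma

/-- Prefix sums of the doubled word, as integers. -/
noncomputable def Hf (w : List ℕ) (j : ℕ) : ℤ := (((w ++ w).take j).sum : ℤ) - j

lemma take_rotate_sum {w : List ℕ} {r i : ℕ} (hr : r ≤ w.length) (hi : i ≤ w.length) :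
    (((w ++ w).take (r + i)).sum : ℤ) =
      ((w ++ w).take r).sum + (((w.rotate r).take i).sum : ℤ) := by
  have h1 : (w ++ w).take (r + i) = (w ++ w).take r ++ ((w ++ w).drop r).take i :=
    List.take_add
  have h2 : (w ++ w).drop r = w.drop r ++ w := by
    rw [List.drop_append_of_le_length hr]
  have h3 : ((w.drop r ++ w).take i) = (w.rotate r).take i := by
    rw [List.rotate_eq_drop_append_take hr]
    rw [List.take_append, List.take_append]
    congr 1
    rw [List.take_take]
    congr 1
    have : w.length - r ≤ i ∨ i < w.length - r := by omega
    rcases this with h | h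
    · have : i - (w.drop r).length ≤ r := by simp [List.length_drop]; omega
      omega
    · simp [List.length_drop]
      omega
  rw [h1, List.sum_append, h2, h3]
  push_cast
  ring

lemma dom_rotate_iff {w : List ℕ} {r : ℕ} (hr : r ≤ w.length) (hw : w.sum + 1 = w.length) :
    Dom 1 (w.rotate r) ↔ ∀ i < w.length, Hf w r ≤ Hf w (r + i) := by
  unfold Dom
  rw [List.length_rotate]
  apply forall₂_congr
  intro i hi
  have := take_rotate_sum hr (le_of_lt hi)
  unfold Hf
  constructor
  · intro h
    have : (i : ℤ) < ((w.rotate r).take i).sum + 1 := by exact_mod_cast h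
    omega
  · intro h
    have : (i : ℤ) < ((w.rotate r).take i).sum + 1 := by omega
    exact_mod_cast this

lemma Hf_shift {w : List ℕ} (hw : w.sum + 1 = w.length) {j : ℕ} (hj : j ≤ w.length) :
    Hf w (j + w.length) = Hf w j - 1 := by
  unfold Hf
  have h1 : (w ++ w).take (j + w.length) = w ++ w.take j := by
    rw [add_comm, List.take_add, List.take_append_of_le_length (le_refl w.length),
      List.take_length, List.drop_append_of_le_length (le_refl w.length), List.drop_length]
    simp
  have h2 : (w ++ w).take j = w.take j := List.take_append_of_le_length hj
  rw [h1, h2, List.sum_append, Nat.cast_add]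
  omega

lemma cycle_lemma {w : List ℕ} (hw : w.sum + 1 = w.length) :
    ∃! r : ℕ, r < w.length ∧ Dom 1 (w.rotate r) := by
  have hm : 0 < w.length := by omega
  -- minimum of Hf on range
  obtain ⟨r₀, hr₀, hmin₀⟩ := Finset.exists_min_image (Finset.range w.length) (Hf w)
    ⟨0, Finset.mem_range.2 hm⟩
  rw [Finset.mem_range] at hr₀
  have hex : ∃ r, r < w.length ∧ ∀ i < w.length, Hf w r ≤ Hf w i :=
    ⟨r₀, hr₀, fun i hi => hmin₀ i (Finset.mem_range.2 hi)⟩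
  set r := Nat.find hex with hrdef
  clear_value r
  obtain ⟨hrm, hrmin⟩ : r < w.length ∧ ∀ i < w.length, Hf w r ≤ Hf w i := by
    rw [hrdef]; exact Nat.find_spec hex
  have hdom : Dom 1 (w.rotate r) := by
    rw [dom_rotate_iff (le_of_lt hrm) hw]
    intro i hi
    by_cases hcase : r + i < w.length
    · exact hrmin _ hcase
    · have hj : r + i - w.length < r := by omega
      have hjm : r + i - w.length ≤ w.length := by omega
      have heq : Hf w (r + i) = Hf w (r + i - w.length) - 1 := by
        have := Hf_shift hw hjm
        rw [show r + i - w.length + w.length = r + i by omega] at this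
        exact this
      have hnot : ¬(r + i - w.length < w.length ∧ ∀ i' < w.length, Hf w (r + i - w.length) ≤ Hf w i') := by
        apply Nat.find_min hex; omega
      push_neg at hnot
      have hjlt : r + i - w.length < w.length := by omega
      obtain ⟨i', hi', hlt⟩ := hnot hjlt
      have h1 : Hf w r ≤ Hf w i' := hrmin i' hi'
      have h2 : Hf w (r + i - w.length) ≥ Hf w r + 1 := by
        have := hrmin (r + i - w.length) hjlt
        omega
      omega
  refine ⟨r, ⟨hrm, hdom⟩, ?_⟩
  rintro y ⟨hym, hydom⟩
  by_contra hne
  -- two distinct dominated rotations lead to a contradiction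
  have key : ∀ a b : ℕ, a < b → b < w.length → Dom 1 (w.rotate a) → Dom 1 (w.rotate b) → False := by
    intro a b hab hbm hda hdb
    rw [dom_rotate_iff (by omega) hw] at hda
    rw [dom_rotate_iff (by omega) hw] at hdb
    have h1 : Hf w a ≤ Hf w b := by
      have := hda (b - a) (by omega)
      rw [show a + (b - a) = b by omega] at this
      exact this
    have h2 : Hf w b ≤ Hf w (a + w.length) := by
      have := hdb (a + w.length - b) (by omega)
      rw [show b + (a + w.length - b) = a + w.length by omega] at this
      exact this
    rw [Hf_shift hw (by omega)] at h2
    omega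
  rcases lt_or_gt_of_ne hne with h | h
  · exact key y r h hrm hydom hdom
  · exact key r y h hym hdom hydom

end CycleLemma

/-- All balanced words (no domination condition). -/
def WordA (n s : ℕ) : Type :=
  {w : List ℕ // Ok w ∧ w.count 0 = n ∧ w.length = n + s ∧ Bal 1 w}

lemma rotate_mem_props {w : List ℕ} {n s r : ℕ}
    (h : Ok w ∧ w.count 0 = n ∧ w.length = n + s ∧ Bal 1 w) :
    Ok (w.rotate r) ∧ (w.rotate r).count 0 = n ∧ (w.rotate r).length = n + s ∧
      Bal 1 (w.rotate r) := by
  obtain ⟨h1, h2, h3, h4⟩ := h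
  have hp : (w.rotate r).Perm w := List.rotate_perm w r
  refine ⟨fun a ha => h1 a (hp.mem_iff.1 ha), ?_, ?_, ?_⟩
  · rw [hp.count_eq, h2]
  · rw [hp.length_eq, h3]
  · unfold Bal at *
    rw [hp.sum_eq, hp.length_eq]
    exact h4

noncomputable def rotEquiv (n s : ℕ) (hns : 1 ≤ n + s) :
    WordA n s ≃ WordD n s × Fin (n + s) := by
  have keyEU : ∀ (a : WordA n s), ∃! r : ℕ, r < a.1.length ∧ Dom 1 (a.1.rotate r) := by
    rintro ⟨w, h1, h2, h3, h4⟩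
    exact cycle_lemma h4
  refine
    { toFun := fun a =>
        (⟨a.1.rotate (keyEU a).choose, ?_⟩,
         ⟨(keyEU a).choose % (n + s), Nat.mod_lt _ (by omega)⟩)
      invFun := fun p => ⟨p.1.1.rotate ((n + s) - p.2.1), ?_⟩
      left_inv := ?_
      right_inv := ?_ }
  · obtain ⟨⟨hrm, hdom⟩, -⟩ := (keyEU a).choose_spec
    obtain ⟨hOk, hc, hl, hB⟩ := rotate_mem_props (r := (keyEU a).choose) a.2
    exact ⟨hOk, hc, hl, hB, hdom⟩
  · obtain ⟨h1, h2, h3, h4, h5⟩ := p.1.2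
    exact rotate_mem_props ⟨h1, h2, h3, h4⟩
  · rintro ⟨w, hw⟩
    obtain ⟨⟨hrm, hdom⟩, -⟩ := (keyEU ⟨w, hw⟩).choose_spec
    apply Subtype.ext
    simp only
    set r := (keyEU ⟨w, hw⟩).choose
    have hrlt : r < n + s := by rw [← hw.2.2.1]; exact hrm
    rw [Nat.mod_eq_of_lt hrlt]
    rw [List.rotate_rotate]
    rw [show r + (n + s - r) = n + s by omega, ← hw.2.2.1, List.rotate_length]
  · rintro ⟨⟨d, hd⟩, ⟨r, hr⟩⟩
    have hlen : d.length = n + s := hd.2.2.1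
    have hback : (d.rotate (n + s - r)).rotate r = d := by
      rw [List.rotate_rotate, show n + s - r + r = n + s by omega, ← hlen,
        List.rotate_length]
    set a : WordA n s := ⟨d.rotate ((n + s) - r), by
      obtain ⟨h1, h2, h3, h4, h5⟩ := hd
      exact rotate_mem_props ⟨h1, h2, h3, h4⟩⟩ with hadef
    obtain ⟨⟨hrm, hdom⟩, huniq⟩ := (keyEU a).choose_spec
    have hreq : (keyEU a).choose = r := by
      refine (huniq r ⟨?_, ?_⟩).symm
      · have : a.1.length = n + s := by
          obtain ⟨h1, h2, h3, h4, h5⟩ := hd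
          exact (rotate_mem_props (r := n + s - r) ⟨h1, h2, h3, h4⟩).2.2.1
        omega
      · show Dom 1 ((d.rotate (n + s - r)).rotate r)
        rw [hback]
        exact hd.2.2.2.2
    refine Prod.ext ?_ ?_
    · apply Subtype.ext
      show a.1.rotate (keyEU a).choose = d
      rw [hreq]
      exact hback
    · apply Fin.ext
      show (keyEU a).choose % (n + s) = r
      rw [hreq, Nat.mod_eq_of_lt hr]

section Counting

lemma count_ofFn : ∀ (m : ℕ) (f : Fin m → ℕ) (c : ℕ),
    (List.ofFn f).count c = (Finset.univ.filter (fun i => f i = c)).card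
  | 0, f, c => by simp
  | m + 1, f, c => by
    rw [List.ofFn_succ, List.count_cons, count_ofFn m (fun i => f i.succ) c,
      Finset.card_filter, Finset.card_filter, Fin.sum_univ_succ]
    by_cases h : f 0 = c
    · simp [h]; omega
    · simp [h, Ne.symm h]

lemma ofFn_getD {w : List ℕ} {m : ℕ} (hlen : w.length = m) :
    List.ofFn (fun i : Fin m => w.getD i 0) = w := by
  apply List.ext_getElem
  · simp [hlen]
  · intro i h1 h2
    rw [List.getElem_ofFn]
    show w.getD i 0 = w[i]
    exact List.getD_eq_getElem w 0 h2

/-- Words as functions. -/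
def GF (n s : ℕ) : Type :=
  {g : Fin (n+s) → ℕ // (∀ i, g i = 0 ∨ 2 ≤ g i) ∧
    (Finset.univ.filter (fun i => g i = 0)).card = n ∧ (∑ i, g i) + 1 = n + s}

def wordFunEquiv (n s : ℕ) : WordA n s ≃ GF n s where
  toFun := fun ⟨w, hOk, hcnt, hlen, hBal⟩ => ⟨fun i => w.getD i 0, by
    have hw : List.ofFn (fun i : Fin (n+s) => w.getD i 0) = w := ofFn_getD hlen
    refine ⟨?_, ?_, ?_⟩
    · intro i
      have hi : (i : ℕ) < w.length := by omega
      show w.getD i 0 = 0 ∨ 2 ≤ w.getD i 0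
      rw [List.getD_eq_getElem w 0 hi]
      exact hOk _ (List.getElem_mem hi)
    · rw [← count_ofFn, hw]
      exact hcnt
    · rw [← List.sum_ofFn, hw]
      unfold Bal at hBal
      omega⟩
  invFun := fun ⟨f, hOk, hcnt, hsum⟩ => ⟨List.ofFn f, by
    refine ⟨?_, ?_, by simp, ?_⟩
    · intro a ha
      obtain ⟨i, rfl⟩ := List.mem_ofFn.1 ha
      exact hOk i
    · rw [count_ofFn]
      exact hcnt
    · unfold Bal
      rw [List.sum_ofFn, List.length_ofFn]
      exact hsum⟩
  left_inv := fun ⟨w, hOk, hcnt, hlen, hBal⟩ => by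
    apply Subtype.ext
    exact ofFn_getD hlen
  right_inv := fun ⟨f, hOk, hcnt, hsum⟩ => by
    apply Subtype.ext
    funext i
    show (List.ofFn f).getD i 0 = f i
    rw [List.getD_eq_getElem _ 0 (by simpa using i.2), List.getElem_ofFn]

end Counting

section Sigma

lemma multiset_card_sum {α β : Type*} (s : Finset α) (f : α → Multiset β) :
    Multiset.card (∑ x ∈ s, f x) = ∑ x ∈ s, Multiset.card (f x) := by
  classical
  induction s using Finset.induction with
  | empty => simp
  | insert _ _ h ih => rw [Finset.sum_insert h, Finset.sum_insert h, Multiset.card_add, ih]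

variable (n s : ℕ)

/-- support of a word-function -/
def suppMap (g : GF n s) : {A : Finset (Fin (n+s)) // A.card = s} :=
  ⟨Finset.univ.filter (fun i => ¬ g.1 i = 0), by
    have h := Finset.card_filter_add_card_filter_not
      (s := (Finset.univ : Finset (Fin (n+s)))) (p := fun i => g.1 i = 0)
    rw [Finset.card_univ, Fintype.card_fin, g.2.2.1] at h
    omega⟩

def fiberEquiv (A : {A : Finset (Fin (n+s)) // A.card = s}) :
    {g : GF n s // suppMap n s g = A} ≃
      {f : {i // i ∈ A.1} → ℕ // (∀ j, 2 ≤ f j) ∧ (∑ j, f j) + 1 = n + s} where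
  toFun := fun ⟨⟨g, hOk, hcnt, hsum⟩, hsupp⟩ => ⟨fun j => g j.1, by
    have hA : Finset.univ.filter (fun i => ¬ g i = 0) = A.1 := congrArg Subtype.val hsupp
    constructor
    · intro j
      have hj : j.1 ∈ Finset.univ.filter (fun i => ¬ g i = 0) := by rw [hA]; exact j.2
      have := (Finset.mem_filter.1 hj).2
      rcases hOk j.1 with h | h
      · exact absurd h this
      · exact h
    · rw [Finset.univ_eq_attach]
      rw [Finset.sum_attach A.1 (fun i => g i)]
      rw [← hA, Finset.sum_filter_ne_zero]
      exact hsum⟩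
  invFun := fun ⟨f, hf2, hfs⟩ =>
    ⟨⟨fun i => if h : i ∈ A.1 then f ⟨i, h⟩ else 0, by
      refine ⟨?_, ?_, ?_⟩
      · intro i
        by_cases h : i ∈ A.1
        · exact Or.inr (by
            show 2 ≤ (if h : i ∈ A.1 then f ⟨i, h⟩ else 0)
            rw [dif_pos h]; exact hf2 _)
        · exact Or.inl (by
            show (if h : i ∈ A.1 then f ⟨i, h⟩ else 0) = 0
            rw [dif_neg h])
      · have : Finset.univ.filter
            (fun i => (if h : i ∈ A.1 then f ⟨i, h⟩ else 0) = 0) = A.1ᶜ := by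
          ext i
          simp only [Finset.mem_filter, Finset.mem_univ, true_and, Finset.mem_compl]
          by_cases h : i ∈ A.1
          · rw [dif_pos h]
            have := hf2 ⟨i, h⟩
            constructor
            · intro h0; omega
            · intro hn; exact absurd h hn
          · rw [dif_neg h]
            simp [h]
        rw [this, Finset.card_compl, Fintype.card_fin, A.2]
        omega
      · have hsplit := Finset.sum_add_sum_compl A.1
          (fun i => if h : i ∈ A.1 then f ⟨i, h⟩ else 0)
        have h0 : ∑ i ∈ A.1ᶜ, (if h : i ∈ A.1 then f ⟨i, h⟩ else 0) = 0 := by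
          apply Finset.sum_eq_zero
          intro i hi
          rw [dif_neg (Finset.mem_compl.1 hi)]
        have h1 : ∑ i ∈ A.1, (if h : i ∈ A.1 then f ⟨i, h⟩ else 0) = ∑ j, f j := by
          rw [← Finset.sum_attach A.1 (fun i => if h : i ∈ A.1 then f ⟨i, h⟩ else 0)]
          rw [Finset.univ_eq_attach]
          apply Finset.sum_congr rfl
          intro j _
          rw [dif_pos j.2]
        rw [← hsplit, h0, h1, add_zero]
        exact hfs⟩, by
      apply Subtype.ext
      show Finset.univ.filter _ = A.1
      ext i
      simp only [Finset.mem_filter, Finset.mem_univ, true_and]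
      by_cases h : i ∈ A.1
      · rw [dif_pos h]
        have := hf2 ⟨i, h⟩
        constructor
        · intro _; exact h
        · intro _; omega
      · rw [dif_neg h]
        simp [h]⟩
  left_inv := fun ⟨⟨g, hOk, hcnt, hsum⟩, hsupp⟩ => by
    have hA : Finset.univ.filter (fun i => ¬ g i = 0) = A.1 := congrArg Subtype.val hsupp
    apply Subtype.ext
    apply Subtype.ext
    funext i
    show (if h : i ∈ A.1 then g i else 0) = g i
    by_cases h : i ∈ A.1
    · rw [dif_pos h]
    · rw [dif_neg h]
      rw [← hA] at h
      simp only [Finset.mem_filter, Finset.mem_univ, true_and, not_not] at h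
      exact h.symm
  right_inv := fun ⟨f, hf2, hfs⟩ => by
    apply Subtype.ext
    funext j
    show (if h : j.1 ∈ A.1 then f ⟨j.1, h⟩ else 0) = f j
    rw [dif_pos j.2]

def shiftEquiv (α : Type*) [Fintype α] (hcard : Fintype.card α = s) (hns : s + 1 ≤ n) :
    {f : α → ℕ // (∀ j, 2 ≤ f j) ∧ (∑ j, f j) + 1 = n + s} ≃
      {f : α → ℕ // ∑ j, f j = n - s - 1} where
  toFun := fun ⟨f, hf2, hfs⟩ => ⟨fun j => f j - 2, by
    have h : ∑ j, (f j - 2) = (∑ j, f j) - ∑ _j : α, 2 :=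
      (Finset.sum_tsub_distrib Finset.univ (fun j _ => hf2 j)).symm ▸ rfl
    rw [h, Finset.sum_const, Finset.card_univ, hcard, smul_eq_mul]
    omega⟩
  invFun := fun ⟨f, hfs⟩ => ⟨fun j => f j + 2, by
    constructor
    · intro j; show 2 ≤ f j + 2; omega
    · show (∑ j, (f j + 2)) + 1 = n + s
      rw [Finset.sum_add_distrib, hfs, Finset.sum_const, Finset.card_univ, hcard,
        smul_eq_mul]
      omega⟩
  left_inv := fun ⟨f, hf2, hfs⟩ => by
    apply Subtype.ext
    funext j
    show f j - 2 + 2 = f j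
    have := hf2 j
    omega
  right_inv := fun ⟨f, hfs⟩ => by
    apply Subtype.ext
    funext j
    show f j + 2 - 2 = f j
    omega

def symEquiv (α : Type*) [Fintype α] [DecidableEq α] (K : ℕ) :
    {f : α → ℕ // ∑ j, f j = K} ≃ Sym α K where
  toFun := fun ⟨f, hf⟩ => ⟨∑ j, Multiset.replicate (f j) j, by
    rw [multiset_card_sum]
    simp only [Multiset.card_replicate]
    exact hf⟩
  invFun := fun μ => ⟨fun j => μ.1.count j, by
    rw [← Finset.sum_subset (Finset.subset_univ μ.1.toFinset)
      (fun x _ hx => Multiset.count_eq_zero.2 (fun hc => hx (Multiset.mem_toFinset.2 hc)))]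
    rw [Multiset.toFinset_sum_count_eq]
    exact μ.2⟩
  left_inv := fun ⟨f, hf⟩ => by
    apply Subtype.ext
    funext j
    show Multiset.count j (∑ i, Multiset.replicate (f i) i) = f j
    rw [Multiset.count_sum']
    rw [Finset.sum_congr rfl (fun i _ => Multiset.count_replicate j i (f i))]
    simp
  right_inv := fun μ => by
    apply Subtype.ext
    show ∑ j, Multiset.replicate (Multiset.count j μ.1) j = μ.1
    have h : ∀ j : α, Multiset.replicate (Multiset.count j μ.1) j
        = Multiset.count j μ.1 • ({j} : Multiset α) := fun j =>
      (Multiset.nsmul_singleton _ _).symm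
    rw [Finset.sum_congr rfl (fun j _ => h j)]
    rw [← Finset.sum_subset (Finset.subset_univ μ.1.toFinset)
      (fun x _ hx => by
        rw [Multiset.count_eq_zero.2 (fun hc => hx (Multiset.mem_toFinset.2 hc)), zero_smul])]
    exact Multiset.toFinset_sum_count_nsmul_eq μ.1

end Sigma


/-- For n ≥ 3 and 1 ≤ s ≤ n-1, the number of (s-1)-codimensional faces of
the (n-2)-dimensional Stasheff associahedron (= plane rooted trees with leaves
1,...,n in this order and s internal vertices, each with at least two children) equals
the Kirkman-Cayley number D_{n+1,s-1} = (1/s) C(n-2,s-1) C(n+s-1,s-1); moreover the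
number C_{n,s} of plane rooted trees with n ordered leaves (over all n! leaf orderings)
and s internal vertices equals n! · D_{n+1,s-1}. -/
theorem stmt_2 (n s : ℕ) (hn : 3 ≤ n) (hs1 : 1 ≤ s) (hs2 : s ≤ n - 1) :
    (Nat.card {T : PTree // T.valid ∧ T.numLeaves = n ∧ T.numInternal = s} : ℚ) =
      (1 / s) * (n - 2).choose (s - 1) * (n + s - 1).choose (s - 1) ∧
    (Nat.card (Equiv.Perm (Fin n) ×
        {T : PTree // T.valid ∧ T.numLeaves = n ∧ T.numInternal = s}) : ℚ) =
      n.factorial * ((1 / s) * (n - 2).choose (s - 1) * (n + s - 1).choose (s - 1)) := by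
  have hns : s + 1 ≤ n := by omega
  have hm : 1 ≤ n + s := by omega
  set c := Nat.card {T : PTree // T.valid ∧ T.numLeaves = n ∧ T.numInternal = s} with hc
  -- chain of equivalences
  have h1 : c = Nat.card (WordD n s) := Nat.card_congr (treeEquiv n s hs1)
  have h2 : Nat.card (WordA n s) = Nat.card (WordD n s) * (n + s) := by
    rw [Nat.card_congr (rotEquiv n s hm), Nat.card_prod,
      Nat.card_eq_fintype_card (α := Fin (n+s)), Fintype.card_fin]
  have bigEquiv : GF n s ≃
      Σ A : {A : Finset (Fin (n+s)) // A.card = s}, Sym {i // i ∈ A.1} (n - s - 1) :=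
    (Equiv.sigmaFiberEquiv (suppMap n s)).symm.trans
      (Equiv.sigmaCongrRight (fun A => (fiberEquiv n s A).trans
        ((shiftEquiv n s _ (by rw [Fintype.card_coe]; exact A.2) hns).trans
          (symEquiv _ _))))
  have h3 : Nat.card (WordA n s) = (n+s).choose s * (n-2).choose (s-1) := by
    rw [Nat.card_congr ((wordFunEquiv n s).trans bigEquiv), Nat.card_eq_fintype_card,
      Fintype.card_sigma]
    have hterm : ∀ A : {A : Finset (Fin (n+s)) // A.card = s},
        Fintype.card (Sym {i // i ∈ A.1} (n-s-1)) = (n-2).choose (s-1) := by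
      intro A
      rw [Sym.card_sym_eq_choose, Fintype.card_coe, A.2]
      have h' : s + (n - s - 1) - 1 = n - 2 := by omega
      have h'' : n - s - 1 = (n - 2) - (s - 1) := by omega
      rw [h', h'', Nat.choose_symm (by omega)]
    rw [Finset.sum_congr rfl (fun A _ => hterm A), Finset.sum_const, Finset.card_univ,
      Fintype.card_finset_len, Fintype.card_fin, smul_eq_mul]
  have keyN : c * (n + s) = (n+s).choose s * (n-2).choose (s-1) := by
    rw [h1, ← h2, h3]
  have hb : (n + s) * (n+s-1).choose (s-1) = (n+s).choose s * s := by
    have h := Nat.add_one_mul_choose_eq (n+s-1) (s-1)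
    rw [show n+s-1+1 = n+s by omega, show s-1+1 = s by omega] at h
    exact h
  have hsQ : (s:ℚ) ≠ 0 := by positivity
  have hmQ : ((n:ℚ) + s) ≠ 0 := by positivity
  have e1 : (c:ℚ) * ((n:ℚ) + s) = ((n+s).choose s : ℚ) * ((n-2).choose (s-1) : ℚ) := by
    exact_mod_cast congrArg (Nat.cast : ℕ → ℚ) keyN
  have e2 : ((n:ℚ) + s) * ((n+s-1).choose (s-1) : ℚ) = ((n+s).choose s : ℚ) * s := by
    exact_mod_cast congrArg (Nat.cast : ℕ → ℚ) hb
  have main : (c : ℚ) =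
      (1 / s) * (n - 2).choose (s - 1) * (n + s - 1).choose (s - 1) := by
    have ec : (c:ℚ) = ((n+s).choose s : ℚ) * ((n-2).choose (s-1):ℚ) / ((n:ℚ)+s) := by
      rw [eq_div_iff hmQ]; exact e1
    have eB : ((n+s-1).choose (s-1) : ℚ) = ((n+s).choose s : ℚ) * s / ((n:ℚ)+s) := by
      rw [eq_div_iff hmQ]; linear_combination e2
    rw [ec, eB]
    field_simp
  refine ⟨main, ?_⟩
  rw [Nat.card_prod, Nat.card_eq_fintype_card, Fintype.card_perm, Fintype.card_fin]
  push_cast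
  rw [main]
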